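/- Let (L, S, U, X, Y) be finite random variables with joint PMF W_{L,S}·q_{U,X|L,S} putting L independent of S, and channel output Y. Then I(U; Y|L) − I(U; S|L) = I(U; Y|L) − I(L,U; S), and hence max over q_{U,X|L,S} of [I(U;(L,Y)) − I(U;(L,S))] ≤ max over q_{U,X|S} of [I(U;Y) − I(U;S)] where on the right the auxiliary variable absorbs L. -/

import Mathlib

open scoped BigOperators Classical
open Finset

noncomputable section

/-- A probability mass function on a finite alphabet. -/
def IsPMF {α : Type*} [Fintype α] (p : α → ℝ) : Prop :=
  (∀ a, 0 ≤ p a) ∧ ∑ a, p a = 1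

/-- Shannon entropy (base 2) of a PMF on a finite alphabet. -/
def ent {α : Type*} [Fintype α] (p : α → ℝ) : ℝ :=
  -∑ a, p a * Real.logb 2 (p a)

/-- Pushforward of a PMF along a map (distribution of a random variable). -/
def pf {Ω T : Type*} [Fintype Ω] (p : Ω → ℝ) (f : Ω → T) : T → ℝ :=
  fun t => ∑ ω, if f ω = t then p ω else 0

/-- Mutual information of a joint PMF on a product alphabet. -/
def mi2 {α β : Type*} [Fintype α] [Fintype β] (p : α × β → ℝ) : ℝ :=
  ent (fun a => ∑ b, p (a, b)) + ent (fun b => ∑ a, p (a, b)) - ent p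

/-- Conditional entropy H(β | α) for a joint PMF on α × β. -/
def condEnt {α β : Type*} [Fintype α] [Fintype β] (p : α × β → ℝ) : ℝ :=
  ent p - ent (fun a => ∑ b, p (a, b))

/-- Conditional mutual information I(β; γ | α) for a joint PMF on α × β × γ. -/
def cmi {α β γ : Type*} [Fintype α] [Fintype β] [Fintype γ] (p : α × β × γ → ℝ) : ℝ :=
  ent (fun ab : α × β => ∑ c, p (ab.1, ab.2, c))
    + ent (fun ac : α × γ => ∑ b, p (ac.1, b, ac.2))
    - ent p - ent (fun a => ∑ b, ∑ c, p (a, b, c))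

/-- Total variation distance between two PMFs on a finite alphabet. -/
def tv {α : Type*} [Fintype α] (p q : α → ℝ) : ℝ :=
  (∑ a, |p a - q a|) / 2

lemma pf_pf {Ω T T' : Type*} [Fintype Ω] [Fintype T] (p : Ω → ℝ) (f : Ω → T) (g : T → T') :
    pf (pf p f) g = pf p (fun ω => g (f ω)) := by
  funext t
  simp only [pf]
  have h1 : ∀ t' : T, (if g t' = t then (∑ ω, if f ω = t' then p ω else 0) else 0)
      = ∑ ω, if f ω = t' then (if g t' = t then p ω else 0) else 0 := by
    intro t'
    split
    · refine Finset.sum_congr rfl fun ω _ => by split <;> simp_all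
    · simp
  rw [Finset.sum_congr rfl fun t' _ => h1 t', Finset.sum_comm]
  refine Finset.sum_congr rfl fun ω _ => ?_
  rw [Finset.sum_ite_eq]
  simp

lemma sum_pf {Ω T : Type*} [Fintype Ω] [Fintype T] (p : Ω → ℝ) (f : Ω → T) :
    ∑ t, pf p f t = ∑ ω, p ω := by
  simp only [pf]
  rw [Finset.sum_comm]
  refine Finset.sum_congr rfl fun ω _ => ?_
  rw [Finset.sum_ite_eq]
  simp




lemma marg_fst2 {α β : Type*} [Fintype α] [Fintype β] (B : α × β → ℝ) :
    (fun a => ∑ b, B (a, b)) = pf B Prod.fst := by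
  funext a
  simp only [pf, Fintype.sum_prod_type]
  rw [Finset.sum_comm]
  refine Finset.sum_congr rfl fun b _ => ?_
  simp [eq_comm]

lemma marg_snd2 {α β : Type*} [Fintype α] [Fintype β] (B : α × β → ℝ) :
    (fun b => ∑ a, B (a, b)) = pf B Prod.snd := by
  funext b
  simp only [pf, Fintype.sum_prod_type]
  refine Finset.sum_congr rfl fun a _ => ?_
  simp [eq_comm]

lemma marg_a3 {α β γ : Type*} [Fintype α] [Fintype β] [Fintype γ] (B : α × β × γ → ℝ) :
    (fun a => ∑ b, ∑ c, B (a, b, c)) = pf B (fun t => t.1) := by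
  funext t
  show _ = ∑ ω : α × β × γ, if ω.1 = t then B ω else 0
  rw [Fintype.sum_prod_type]
  show _ = ∑ x : α, ∑ w : β × γ, if x = t then B (x, w) else 0
  simp [Finset.sum_ite_irrel, Finset.sum_const_zero, Finset.sum_ite_eq', Fintype.sum_prod_type]

lemma marg_fst3 {α β γ : Type*} [Fintype α] [Fintype β] [Fintype γ] (B : α × β × γ → ℝ) :
    (fun ab : α × β => ∑ c, B (ab.1, ab.2, c)) = pf B (fun t => (t.1, t.2.1)) := by
  funext t
  have h : pf B (fun t => (t.1, t.2.1)) t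
      = ∑ w : (α × β) × γ, if w.1 = t then B (w.1.1, w.1.2, w.2) else 0 :=
    Fintype.sum_equiv (Equiv.prodAssoc α β γ).symm _ _ (by rintro ⟨x, y, z⟩; simp [Equiv.prodAssoc]; congr)
  rw [h, Fintype.sum_prod_type]
  show _ = ∑ w1 : α × β, ∑ z : γ, if w1 = t then B (w1.1, w1.2, z) else 0
  simp [Finset.sum_ite_irrel, Finset.sum_const_zero, Finset.sum_ite_eq']

def eACB (α β γ : Type*) : ((α × γ) × β) ≃ (α × β × γ) where
  toFun w := (w.1.1, w.2, w.1.2)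
  invFun ω := ((ω.1, ω.2.2), ω.2.1)
  left_inv := by rintro ⟨⟨a, c⟩, b⟩; rfl
  right_inv := by rintro ⟨a, b, c⟩; rfl

lemma marg_mid3 {α β γ : Type*} [Fintype α] [Fintype β] [Fintype γ] (B : α × β × γ → ℝ) :
    (fun ac : α × γ => ∑ b, B (ac.1, b, ac.2)) = pf B (fun t => (t.1, t.2.2)) := by
  funext t
  have h : pf B (fun t => (t.1, t.2.2)) t
      = ∑ w : (α × γ) × β, if w.1 = t then B (w.1.1, w.2, w.1.2) else 0 :=
    Fintype.sum_equiv (eACB α β γ).symm _ _ (by rintro ⟨a, b, c⟩; simp [eACB]; congr)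
  rw [h, Fintype.sum_prod_type]
  show _ = ∑ w1 : α × γ, ∑ b : β, if w1 = t then B (w1.1, b, w1.2) else 0
  simp [Finset.sum_ite_irrel, Finset.sum_const_zero, Finset.sum_ite_eq']

lemma ent_pf_equiv {Ω T T' : Type*} [Fintype Ω] [Fintype T] [Fintype T'] (p : Ω → ℝ)
    (f : Ω → T) (e : T ≃ T') :
    ent (pf p (fun ω => e (f ω))) = ent (pf p f) := by
  unfold ent
  congr 1
  refine (Fintype.sum_equiv e _ _ fun t => ?_).symm
  have h : pf p (fun ω => e (f ω)) (e t) = pf p f t := by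
    unfold pf
    refine Finset.sum_congr rfl fun ω _ => ?_
    simp [e.apply_eq_iff_eq]
  rw [h]

lemma mi2_pf {Ω α β : Type*} [Fintype Ω] [Fintype α] [Fintype β] (p : Ω → ℝ) (F : Ω → α × β) :
    mi2 (pf p F) = ent (pf p (fun ω => (F ω).1)) + ent (pf p (fun ω => (F ω).2))
      - ent (pf p F) := by
  unfold mi2
  rw [marg_fst2, marg_snd2, pf_pf, pf_pf]

lemma cmi_pf {Ω α β γ : Type*} [Fintype Ω] [Fintype α] [Fintype β] [Fintype γ]
    (p : Ω → ℝ) (G : Ω → α × β × γ) :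
    cmi (pf p G) = ent (pf p (fun ω => ((G ω).1, (G ω).2.1)))
      + ent (pf p (fun ω => ((G ω).1, (G ω).2.2)))
      - ent (pf p G) - ent (pf p (fun ω => (G ω).1)) := by
  unfold cmi
  rw [marg_fst3, marg_mid3, marg_a3, pf_pf, pf_pf, pf_pf]

lemma ent_prod {α β : Type*} [Fintype α] [Fintype β] (pa : α → ℝ) (pb : β → ℝ)
    (ha : ∑ a, pa a = 1) (hb : ∑ b, pb b = 1) :
    ent (fun ab : α × β => pa ab.1 * pb ab.2) = ent pa + ent pb := by
  unfold ent
  rw [Fintype.sum_prod_type]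
  have key : ∀ a b, pa a * pb b * Real.logb 2 (pa a * pb b)
      = pb b * (pa a * Real.logb 2 (pa a)) + pa a * (pb b * Real.logb 2 (pb b)) := by
    intro a b
    rcases eq_or_ne (pa a) 0 with h | h
    · simp [h]
    rcases eq_or_ne (pb b) 0 with h' | h'
    · simp [h']
    rw [Real.logb_mul h h']; ring
  have : ∀ a, (∑ b, pa a * pb b * Real.logb 2 (pa a * pb b))
      = pa a * Real.logb 2 (pa a) + pa a * ∑ b, pb b * Real.logb 2 (pb b) := by
    intro a
    simp_rw [key]
    rw [Finset.sum_add_distrib, ← Finset.sum_mul, ← Finset.mul_sum, hb, one_mul]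
  simp_rw [this]
  rw [Finset.sum_add_distrib, ← Finset.sum_mul, ha, one_mul]
  ring

lemma mi2_nonneg {α β : Type*} [Fintype α] [Fintype β] (p : α × β → ℝ)
    (h0 : ∀ ab, 0 ≤ p ab) (h1 : ∑ ab, p ab = 1) : 0 ≤ mi2 p := by
  set pa : α → ℝ := fun a => ∑ b, p (a, b) with hpa
  set pb : β → ℝ := fun b => ∑ a, p (a, b) with hpb
  have hpa0 : ∀ a, 0 ≤ pa a := fun a => Finset.sum_nonneg fun b _ => h0 _
  have hpb0 : ∀ b, 0 ≤ pb b := fun b => Finset.sum_nonneg fun a _ => h0 _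
  have hsum : ∑ a, ∑ b, p (a, b) = 1 := by rw [← Fintype.sum_prod_type]; exact h1
  have hpasum : ∑ a, pa a = 1 := hsum
  have hpbsum : ∑ b, pb b = 1 := by rw [Finset.sum_comm] at hsum; exact hsum
  -- mi2 p = H pa + H pb - H p ≥ 0
  unfold mi2 ent
  rw [← hpa, ← hpb]
  have step : ∀ ab : α × β,
      p ab * Real.logb 2 (pa ab.1 * pb ab.2) - p ab * Real.logb 2 (p ab)
        ≤ (pa ab.1 * pb ab.2 - p ab) / Real.log 2 := by
    intro ab
    rcases eq_or_lt_of_le (h0 ab) with h | h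
    · rw [← h]
      have hnn : 0 ≤ pa ab.1 * pb ab.2 := mul_nonneg (hpa0 _) (hpb0 _)
      have h2 : (0:ℝ) < Real.log 2 := Real.log_pos (by norm_num)
      simp only [zero_mul, sub_zero, sub_self]
      exact div_nonneg hnn h2.le
    · have hpa' : 0 < pa ab.1 := lt_of_lt_of_le h (by
        rw [hpa]
        exact Finset.single_le_sum (f := fun b => p (ab.1, b)) (fun b _ => h0 _) (Finset.mem_univ ab.2))
      have hpb' : 0 < pb ab.2 := lt_of_lt_of_le h (by
        rw [hpb]
        exact Finset.single_le_sum (f := fun a => p (a, ab.2)) (fun a _ => h0 _) (Finset.mem_univ ab.1))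
      have hlog : Real.log (pa ab.1 * pb ab.2 / p ab) ≤ pa ab.1 * pb ab.2 / p ab - 1 :=
        Real.log_le_sub_one_of_pos (by positivity)
      have heq : Real.logb 2 (pa ab.1 * pb ab.2) - Real.logb 2 (p ab)
          = Real.log (pa ab.1 * pb ab.2 / p ab) / Real.log 2 := by
        rw [Real.log_div (by positivity) (ne_of_gt h)]
        unfold Real.logb
        ring
      have h2 : Real.log 2 > 0 := Real.log_pos (by norm_num)
      calc p ab * Real.logb 2 (pa ab.1 * pb ab.2) - p ab * Real.logb 2 (p ab)
          = p ab * (Real.log (pa ab.1 * pb ab.2 / p ab) / Real.log 2) := by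
            rw [← heq]; ring
        _ ≤ p ab * ((pa ab.1 * pb ab.2 / p ab - 1) / Real.log 2) := by
            apply mul_le_mul_of_nonneg_left _ (le_of_lt h)
            exact div_le_div_of_nonneg_right hlog h2.le
        _ = (pa ab.1 * pb ab.2 - p ab) / Real.log 2 := by
            field_simp
    
  have hsum2 : ∑ ab : α × β, (p ab * Real.logb 2 (pa ab.1 * pb ab.2) - p ab * Real.logb 2 (p ab))
      ≤ ∑ ab : α × β, (pa ab.1 * pb ab.2 - p ab) / Real.log 2 :=
    Finset.sum_le_sum fun ab _ => step ab
  have hrhs : ∑ ab : α × β, (pa ab.1 * pb ab.2 - p ab) / Real.log 2 = 0 := by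
    rw [← Finset.sum_div]
    rw [Finset.sum_sub_distrib, h1]
    rw [Fintype.sum_prod_type]
    simp_rw [← Finset.mul_sum]
    rw [← Finset.sum_mul, hpasum, hpbsum]
    norm_num
  -- expand entropies
  have hA : ∑ a, pa a * Real.logb 2 (pa a) = ∑ ab : α × β, p ab * Real.logb 2 (pa ab.1) := by
    rw [Fintype.sum_prod_type]
    refine Finset.sum_congr rfl fun a _ => ?_
    rw [hpa]
    simp only []
    rw [← Finset.sum_mul]
  have hB : ∑ b, pb b * Real.logb 2 (pb b) = ∑ ab : α × β, p ab * Real.logb 2 (pb ab.2) := by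
    rw [Fintype.sum_prod_type, Finset.sum_comm]
    refine Finset.sum_congr rfl fun b _ => ?_
    rw [hpb]
    simp only []
    rw [← Finset.sum_mul]
  have hsplit : ∀ ab : α × β, p ab * Real.logb 2 (pa ab.1 * pb ab.2)
      = p ab * Real.logb 2 (pa ab.1) + p ab * Real.logb 2 (pb ab.2) := by
    intro ab
    rcases eq_or_lt_of_le (h0 ab) with h | h
    · rw [← h]; ring
    · have hpa' : 0 < pa ab.1 := lt_of_lt_of_le h (by
        rw [hpa]
        exact Finset.single_le_sum (f := fun b => p (ab.1, b)) (fun b _ => h0 _) (Finset.mem_univ ab.2))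
      have hpb' : 0 < pb ab.2 := lt_of_lt_of_le h (by
        rw [hpb]
        exact Finset.single_le_sum (f := fun a => p (a, ab.2)) (fun a _ => h0 _) (Finset.mem_univ ab.1))
      rw [Real.logb_mul hpa'.ne' hpb'.ne']
      ring
  rw [Finset.sum_sub_distrib] at hsum2
  simp_rw [hsplit, Finset.sum_add_distrib] at hsum2
  rw [hrhs] at hsum2
  rw [hA, hB]
  linarith

lemma pf_via_equiv {Ω T R : Type*} [Fintype Ω] [Fintype T] [Fintype R] (p : Ω → ℝ)
    (f : Ω → T) (e : T × R ≃ Ω) (he : ∀ v : T × R, f (e v) = v.1) (t : T) :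
    pf p f t = ∑ r : R, p (e (t, r)) := by
  unfold pf
  rw [← Equiv.sum_comp e (fun ω => if f ω = t then p ω else 0)]
  simp only [he]
  exact (congrFun (marg_fst2 fun v => p (e v)) t).symm

def eSwap (α β γ : Type*) : ((α × β) × γ) ≃ (β × (α × γ)) where
  toFun w := (w.1.2, (w.1.1, w.2))
  invFun v := ((v.2.1, v.1), v.2.2)
  left_inv := by rintro ⟨⟨a, b⟩, c⟩; rfl
  right_inv := by rintro ⟨b, a, c⟩; rfl

section main
variable {L S U X Y : Type*} [Fintype L] [Fintype S] [Fintype U] [Fintype X] [Fintype Y]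

def eLS (L S U X Y : Type*) : ((L × S) × (U × X × Y)) ≃ (L × S × U × X × Y) where
  toFun v := (v.1.1, v.1.2, v.2.1, v.2.2.1, v.2.2.2)
  invFun ω := ((ω.1, ω.2.1), ω.2.2.1, ω.2.2.2.1, ω.2.2.2.2)
  left_inv := by rintro ⟨⟨l, s⟩, u, x, y⟩; rfl
  right_inv := by rintro ⟨l, s, u, x, y⟩; rfl


def eF3 (L S U X Y : Type*) : (((L × U) × S) × (X × Y)) ≃ (L × S × U × X × Y) where
  toFun v := (v.1.1.1, v.1.2, v.1.1.2, v.2.1, v.2.2)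
  invFun ω := (((ω.1, ω.2.2.1), ω.2.1), ω.2.2.2.1, ω.2.2.2.2)
  left_inv := by rintro ⟨⟨⟨l, u⟩, s⟩, x, y⟩; rfl
  right_inv := by rintro ⟨l, s, u, x, y⟩; rfl

def eF6 (L S U X Y : Type*) : (((L × U) × Y) × (S × X)) ≃ (L × S × U × X × Y) where
  toFun v := (v.1.1.1, v.2.1, v.1.1.2, v.2.2, v.1.2)
  invFun ω := (((ω.1, ω.2.2.1), ω.2.2.2.2), ω.2.1, ω.2.2.2.1)
  left_inv := by rintro ⟨⟨⟨l, u⟩, y⟩, s, x⟩; rfl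
  right_inv := by rintro ⟨l, s, u, x, y⟩; rfl

end main

/-- with joint PMF `W_L·W_S·q_{U,X|L,S}·W_{Y|S,X}` (`L ⫫ S`):
`I(U;Y|L) − I(U;S|L) = I(U;Y|L) − I(L,U;S)`, and hence the GP-type quantity
`I(U;(L,Y)) − I(U;(L,S))` is dominated by `I(U';Y) − I(U';S)` for a choice of
conditional PMF `q'_{U',X|S}` whose auxiliary `U' = (L,U)` absorbs `L`. -/
theorem stmt_15 {L S U X Y : Type*}
    [Fintype L] [Fintype S] [Fintype U] [Fintype X] [Fintype Y]
    (WL : L → ℝ) (WS : S → ℝ) (q : L × S → U × X → ℝ) (Wch : S × X → Y → ℝ)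
    (hWL : IsPMF WL) (hWS : IsPMF WS) (hq : ∀ ls, IsPMF (q ls)) (hW : ∀ sx, IsPMF (Wch sx))
    (p : L × S × U × X × Y → ℝ)
    (hfac : ∀ l s u x y,
      p (l, s, u, x, y) = WL l * WS s * q (l, s) (u, x) * Wch (s, x) y) :
    (cmi (pf p (fun ω => (ω.1, ω.2.2.1, ω.2.2.2.2)))
        - cmi (pf p (fun ω => (ω.1, ω.2.2.1, ω.2.1)))
      = cmi (pf p (fun ω => (ω.1, ω.2.2.1, ω.2.2.2.2)))
        - mi2 (pf p (fun ω => (((ω.1, ω.2.2.1) : L × U), ω.2.1))))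
    ∧ ∃ q' : S → (L × U) × X → ℝ, (∀ s, IsPMF (q' s)) ∧
        mi2 (pf p (fun ω => (ω.2.2.1, ((ω.1, ω.2.2.2.2) : L × Y))))
          - mi2 (pf p (fun ω => (ω.2.2.1, ((ω.1, ω.2.1) : L × S))))
        ≤ mi2 (fun w : (L × U) × Y => ∑ s, ∑ x, WS s * q' s (w.1, x) * Wch (s, x) w.2)
          - mi2 (fun w : (L × U) × S => ∑ x, ∑ y, WS w.2 * q' w.2 (w.1, x) * Wch (w.2, x) y) := by
  have hchy : ∀ s x, ∑ y, Wch (s, x) y = 1 := fun s x => (hW (s, x)).2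
  have hqsum : ∀ l s, (∑ u, ∑ x, q (l, s) (u, x)) = 1 := fun l s => by
    have h := (hq (l, s)).2
    rwa [Fintype.sum_prod_type] at h
  -- joint of (L,S) is the product PMF
  have hA5 : pf p (fun ω : L × S × U × X × Y => (ω.1, ω.2.1)) = fun ls => WL ls.1 * WS ls.2 := by
    funext ls
    rw [pf_via_equiv p _ (eLS L S U X Y) (by rintro ⟨⟨l, s⟩, u, x, y⟩; rfl) ls]
    simp only [eLS, Equiv.coe_fn_mk]
    rw [Fintype.sum_prod_type]
    simp_rw [Fintype.sum_prod_type, hfac, ← Finset.mul_sum, hchy, mul_one]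
    simp_rw [← Finset.mul_sum]
    rw [hqsum, mul_one]
  have hL : pf p (fun ω : L × S × U × X × Y => ω.1) = WL := by
    have h : pf p (fun ω : L × S × U × X × Y => ω.1)
        = pf (fun ls : L × S => WL ls.1 * WS ls.2) Prod.fst := by
      rw [← hA5]; exact (pf_pf p (fun ω : L × S × U × X × Y => (ω.1, ω.2.1)) Prod.fst).symm
    rw [h, ← marg_fst2]
    funext l
    simp only [← Finset.mul_sum, hWS.2, mul_one]
  have hS : pf p (fun ω : L × S × U × X × Y => ω.2.1) = WS := by
    have h : pf p (fun ω : L × S × U × X × Y => ω.2.1)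
        = pf (fun ls : L × S => WL ls.1 * WS ls.2) Prod.snd := by
      rw [← hA5]; exact (pf_pf p (fun ω : L × S × U × X × Y => (ω.1, ω.2.1)) Prod.snd).symm
    rw [h, ← marg_snd2]
    funext s
    simp only [← Finset.sum_mul, hWL.2, one_mul]
  have hp0 : ∀ ω, 0 ≤ p ω := by
    rintro ⟨l, s, u, x, y⟩
    rw [hfac]
    exact mul_nonneg (mul_nonneg (mul_nonneg (hWL.1 l) (hWS.1 s)) ((hq _).1 _)) ((hW _).1 _)
  have htot : ∑ ω, p ω = 1 := by
    rw [← sum_pf p (fun ω : L × S × U × X × Y => (ω.1, ω.2.1)), hA5, Fintype.sum_prod_type]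
    simp_rw [← Finset.mul_sum, hWS.2, mul_one]
    exact hWL.2
  -- clean expansions of all information quantities
  have hentLS : ent (pf p (fun ω : L × S × U × X × Y => (ω.1, ω.2.1))) = ent WL + ent WS := by
    rw [hA5]; exact ent_prod WL WS hWL.2 hWS.2
  have hentl : ent (pf p (fun ω : L × S × U × X × Y => ω.1)) = ent WL := by rw [hL]
  have hents : ent (pf p (fun ω : L × S × U × X × Y => ω.2.1)) = ent WS := by rw [hS]
  have hE1 : ent (pf p (fun ω : L × S × U × X × Y => (((ω.1, ω.2.2.1) : L × U), ω.2.1)))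
      = ent (pf p (fun ω : L × S × U × X × Y => (ω.1, ω.2.2.1, ω.2.1))) :=
    ent_pf_equiv p (fun ω => (ω.1, ω.2.2.1, ω.2.1)) (Equiv.prodAssoc L U S).symm
  have hE2 : ent (pf p (fun ω : L × S × U × X × Y => (ω.2.2.1, ((ω.1, ω.2.2.2.2) : L × Y))))
      = ent (pf p (fun ω : L × S × U × X × Y => (((ω.1, ω.2.2.1) : L × U), ω.2.2.2.2))) :=
    ent_pf_equiv p (fun ω => ((ω.1, ω.2.2.1), ω.2.2.2.2)) (eSwap L U Y)
  have hE3 : ent (pf p (fun ω : L × S × U × X × Y => (ω.2.2.1, ((ω.1, ω.2.1) : L × S))))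
      = ent (pf p (fun ω : L × S × U × X × Y => (((ω.1, ω.2.2.1) : L × U), ω.2.1))) :=
    ent_pf_equiv p (fun ω => ((ω.1, ω.2.2.1), ω.2.1)) (eSwap L U S)
  have c2 : cmi (pf p (fun ω : L × S × U × X × Y => (ω.1, ω.2.2.1, ω.2.1)))
      = ent (pf p (fun ω : L × S × U × X × Y => (ω.1, ω.2.2.1)))
        + ent (pf p (fun ω : L × S × U × X × Y => (ω.1, ω.2.1)))
        - ent (pf p (fun ω : L × S × U × X × Y => (ω.1, ω.2.2.1, ω.2.1)))
        - ent (pf p (fun ω : L × S × U × X × Y => ω.1)) :=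
    cmi_pf p (fun ω => (ω.1, ω.2.2.1, ω.2.1))
  have m3 : mi2 (pf p (fun ω : L × S × U × X × Y => (((ω.1, ω.2.2.1) : L × U), ω.2.1)))
      = ent (pf p (fun ω : L × S × U × X × Y => (ω.1, ω.2.2.1)))
        + ent (pf p (fun ω : L × S × U × X × Y => ω.2.1))
        - ent (pf p (fun ω : L × S × U × X × Y => (((ω.1, ω.2.2.1) : L × U), ω.2.1))) :=
    mi2_pf p (fun ω => ((ω.1, ω.2.2.1), ω.2.1))
  have m4 : mi2 (pf p (fun ω : L × S × U × X × Y => (ω.2.2.1, ((ω.1, ω.2.2.2.2) : L × Y))))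
      = ent (pf p (fun ω : L × S × U × X × Y => ω.2.2.1))
        + ent (pf p (fun ω : L × S × U × X × Y => ((ω.1, ω.2.2.2.2) : L × Y)))
        - ent (pf p (fun ω : L × S × U × X × Y => (ω.2.2.1, ((ω.1, ω.2.2.2.2) : L × Y)))) :=
    mi2_pf p (fun ω => (ω.2.2.1, (ω.1, ω.2.2.2.2)))
  have m5 : mi2 (pf p (fun ω : L × S × U × X × Y => (ω.2.2.1, ((ω.1, ω.2.1) : L × S))))
      = ent (pf p (fun ω : L × S × U × X × Y => ω.2.2.1))
        + ent (pf p (fun ω : L × S × U × X × Y => (ω.1, ω.2.1)))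
        - ent (pf p (fun ω : L × S × U × X × Y => (ω.2.2.1, ((ω.1, ω.2.1) : L × S)))) :=
    mi2_pf p (fun ω => (ω.2.2.1, (ω.1, ω.2.1)))
  have m6 : mi2 (pf p (fun ω : L × S × U × X × Y => (((ω.1, ω.2.2.1) : L × U), ω.2.2.2.2)))
      = ent (pf p (fun ω : L × S × U × X × Y => (ω.1, ω.2.2.1)))
        + ent (pf p (fun ω : L × S × U × X × Y => ω.2.2.2.2))
        - ent (pf p (fun ω : L × S × U × X × Y => (((ω.1, ω.2.2.1) : L × U), ω.2.2.2.2))) :=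
    mi2_pf p (fun ω => ((ω.1, ω.2.2.1), ω.2.2.2.2))
  have m7 : mi2 (pf p (fun ω : L × S × U × X × Y => ((ω.1, ω.2.2.2.2) : L × Y)))
      = ent (pf p (fun ω : L × S × U × X × Y => ω.1))
        + ent (pf p (fun ω : L × S × U × X × Y => ω.2.2.2.2))
        - ent (pf p (fun ω : L × S × U × X × Y => ((ω.1, ω.2.2.2.2) : L × Y))) :=
    mi2_pf p (fun ω => (ω.1, ω.2.2.2.2))
  have nn : 0 ≤ mi2 (pf p (fun ω : L × S × U × X × Y => ((ω.1, ω.2.2.2.2) : L × Y))) := by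
    refine mi2_nonneg _ (fun ab => Finset.sum_nonneg fun ω _ => ?_) ?_
    · split
      · exact hp0 ω
      · exact le_rfl
    · rw [sum_pf]; exact htot
  constructor
  · -- part 1
    have key : cmi (pf p (fun ω : L × S × U × X × Y => (ω.1, ω.2.2.1, ω.2.1)))
        = mi2 (pf p (fun ω : L × S × U × X × Y => (((ω.1, ω.2.2.1) : L × U), ω.2.1))) := by
      rw [c2, m3, hE1, hentLS, hentl, hents]
      ring
    rw [key]
  · -- part 2
    refine ⟨fun s w => WL w.1.1 * q (w.1.1, s) (w.1.2, w.2), fun s => ⟨fun w => mul_nonneg (hWL.1 _) ((hq _).1 _), ?_⟩, ?_⟩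
    · rw [Fintype.sum_prod_type, Fintype.sum_prod_type]
      simp only []
      simp_rw [← Finset.mul_sum, hqsum, mul_one]
      exact hWL.2
    · have hr1 : (fun w : (L × U) × Y => ∑ s, ∑ x,
          WS s * (WL w.1.1 * q (w.1.1, s) (w.1.2, x)) * Wch (s, x) w.2)
          = pf p (fun ω : L × S × U × X × Y => (((ω.1, ω.2.2.1) : L × U), ω.2.2.2.2)) := by
        funext w; obtain ⟨⟨l, u⟩, y⟩ := w
        rw [pf_via_equiv p _ (eF6 L S U X Y) (by rintro ⟨⟨⟨l, u⟩, y⟩, s, x⟩; rfl),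
          Fintype.sum_prod_type]
        refine Finset.sum_congr rfl fun s _ => Finset.sum_congr rfl fun x _ => ?_
        show WS s * (WL l * q (l, s) (u, x)) * Wch (s, x) y = p (l, s, u, x, y)
        rw [hfac]; ring
      have hr2 : (fun w : (L × U) × S => ∑ x, ∑ y,
          WS w.2 * (WL w.1.1 * q (w.1.1, w.2) (w.1.2, x)) * Wch (w.2, x) y)
          = pf p (fun ω : L × S × U × X × Y => (((ω.1, ω.2.2.1) : L × U), ω.2.1)) := by
        funext w; obtain ⟨⟨l, u⟩, s⟩ := w
        rw [pf_via_equiv p _ (eF3 L S U X Y) (by rintro ⟨⟨⟨l, u⟩, s⟩, x, y⟩; rfl),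
          Fintype.sum_prod_type]
        refine Finset.sum_congr rfl fun x _ => Finset.sum_congr rfl fun y _ => ?_
        show WS s * (WL l * q (l, s) (u, x)) * Wch (s, x) y = p (l, s, u, x, y)
        rw [hfac]; ring
      rw [hr1, hr2]
      linarith [m3, m4, m5, m6, m7, nn, hE2, hE3, hE1, hentLS, hentl, hents]
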